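/- Let $G$ be a split metacyclic $2$-group, i.e., $G = \langle a\rangle \rtimes \langle b\rangle \cong C_{2^n} \rtimes C_{2^m}$ with $n, m \geq 1$. If the center $Z(G)$ is not cyclic, then the subgroup $\Omega_1(G)$ generated by all elements of order dividing $2$ is isomorphic to $C_2 \times C_2$. -/

import Mathlib

open scoped Pointwise

theorem aux_bezout (m : ℕ) (hm : 1 ≤ m) (t : ℤ) (ht : ¬ ((2:ℤ)^m ∣ t)) :
    ∃ s c : ℤ, 2^(m-1) = t * s + 2^m * c := by
  set d : ℕ := Int.gcd t (2^m) with hd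
  have hdl : (d:ℤ) ∣ t := Int.gcd_dvd_left t (2^m)
  have hdr : (d:ℤ) ∣ (2:ℤ)^m := Int.gcd_dvd_right t (2^m)
  have h1 : d ∣ 2^m := by
    have : (d:ℤ) ∣ ((2^m : ℕ) : ℤ) := by push_cast; exact hdr
    exact_mod_cast Int.ofNat_dvd.mp this
  obtain ⟨e, he, hde⟩ := (Nat.dvd_prime_pow Nat.prime_two).mp h1
  have hem : e ≠ m := by
    intro hem
    apply ht
    rw [hde, hem] at hdl
    calc (2:ℤ)^m = ((2^m : ℕ) : ℤ) := by push_cast; ring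
      _ ∣ t := hdl
  have hdvd : (d:ℤ) ∣ 2^(m-1) := by
    have h3 : d ∣ 2^(m-1) := by rw [hde]; exact pow_dvd_pow 2 (by omega)
    have : (d:ℤ) ∣ ((2^(m-1) : ℕ) : ℤ) := Int.ofNat_dvd.mpr h3
    push_cast at this; exact this
  obtain ⟨q, hq⟩ := hdvd
  have hb := Int.gcd_eq_gcd_ab t ((2:ℤ)^m)
  rw [← hd] at hb
  refine ⟨Int.gcdA t (2^m) * q, Int.gcdB t (2^m) * q, ?_⟩
  rw [hq, hb]; ring

set_option maxHeartbeats 1000000 in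
theorem stmt_9 (G : Type*) [Group G] (a b : G) (n m : ℕ)
    (hn : 1 ≤ n) (hm : 1 ≤ m)
    (ha : orderOf a = 2 ^ n) (hb : orderOf b = 2 ^ m)
    (hN : (Subgroup.zpowers a).Normal)
    (hgen : Subgroup.zpowers a ⊔ Subgroup.zpowers b = ⊤)
    (hint : Subgroup.zpowers a ⊓ Subgroup.zpowers b = ⊥)
    (hZ : ¬ IsCyclic (Subgroup.center G)) :
    Nonempty ((Subgroup.closure {g : G | g ^ 2 = 1}) ≃*
      (Multiplicative (ZMod 2) × Multiplicative (ZMod 2))) := by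
  haveI := hN
  set z : G := a ^ (2^(n-1)) with hzdef
  set u : G := b ^ (2^(m-1)) with hudef
  have hbk : ∀ k : ℤ, b ^ k ∈ Subgroup.zpowers a → b ^ k = 1 := by
    intro k hk
    have : b ^ k ∈ Subgroup.zpowers a ⊓ Subgroup.zpowers b :=
      ⟨hk, Subgroup.zpow_mem _ (Subgroup.mem_zpowers b) k⟩
    rw [hint, Subgroup.mem_bot] at this; exact this
  have hak : ∀ g : G, g ∈ Subgroup.zpowers a → g ∈ Subgroup.zpowers b → g = 1 := by
    intro g h1 h2
    have : g ∈ Subgroup.zpowers a ⊓ Subgroup.zpowers b := ⟨h1, h2⟩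
    rw [hint, Subgroup.mem_bot] at this; exact this
  have hZpow : ∀ k : ℕ, 1 ≤ k → (2:ℤ)^k = 2 * 2^(k-1) := by
    intro k hk
    conv_lhs => rw [show k = (k-1)+1 by omega]
    rw [pow_succ]; ring
  have hpow2 : ∀ k : ℕ, 1 ≤ k → 2^(k-1) + 2^(k-1) = 2^k := by
    intro k hk
    have h : k - 1 + 1 = k := by omega
    calc 2^(k-1) + 2^(k-1) = 2^(k-1) * 2 := by ring
      _ = 2^(k-1+1) := (pow_succ 2 (k-1)).symm
      _ = 2^k := by rw [h]
  have hz2 : z * z = 1 := by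
    rw [hzdef, ← pow_add, hpow2 n hn, ← ha, pow_orderOf_eq_one]
  have hu2 : u * u = 1 := by
    rw [hudef, ← pow_add, hpow2 m hm, ← hb, pow_orderOf_eq_one]
  have hz1 : z ≠ 1 := by
    intro h
    have := orderOf_dvd_of_pow_eq_one (n := 2^(n-1)) (x := a) h
    rw [ha] at this
    have h1 := Nat.le_of_dvd (by positivity) this
    have h2 : (2:ℕ)^(n-1) < 2^n := Nat.pow_lt_pow_right (by norm_num) (by omega)
    omega
  have hu1 : u ≠ 1 := by
    intro h
    have := orderOf_dvd_of_pow_eq_one (n := 2^(m-1)) (x := b) h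
    rw [hb] at this
    have h1 := Nat.le_of_dvd (by positivity) this
    have h2 : (2:ℕ)^(m-1) < 2^m := Nat.pow_lt_pow_right (by norm_num) (by omega)
    omega
  have hzmem : z ∈ Subgroup.zpowers a := Subgroup.pow_mem _ (Subgroup.mem_zpowers a) _
  have humem : u ∈ Subgroup.zpowers b := Subgroup.pow_mem _ (Subgroup.mem_zpowers b) _
  have hznu : z ≠ u := fun h => hz1 (hak z hzmem (h ▸ humem))
  -- Step 1 : the center is not contained in ⟨a⟩
  have hZa : ¬ (Subgroup.center G ≤ Subgroup.zpowers a) := by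
    intro hle
    apply hZ
    haveI : IsCyclic (Subgroup.zpowers a) := by
      constructor
      refine ⟨⟨a, Subgroup.mem_zpowers a⟩, ?_⟩
      rintro ⟨x, k, rfl⟩
      exact ⟨k, by ext; simp⟩
    exact isCyclic_of_surjective _ (Subgroup.subgroupOfEquivOfLe hle).surjective
  obtain ⟨w, hwZ, hwa⟩ : ∃ w ∈ Subgroup.center G, w ∉ Subgroup.zpowers a := by
    by_contra hc
    push_neg at hc
    exact hZa hc
  -- Step 2 : u commutes with a
  have hua : Commute a u := by
    set π := QuotientGroup.mk' (Subgroup.zpowers a) with hπ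
    have hker : ∀ x : G, π x = 1 ↔ x ∈ Subgroup.zpowers a := fun x =>
      QuotientGroup.eq_one_iff x
    have hordb : orderOf (π b) = 2^m := by
      have h1 : orderOf (π b) ∣ 2^m := hb ▸ orderOf_map_dvd π b
      have h2 : 2^m ∣ orderOf (π b) := by
        rw [← hb]
        apply orderOf_dvd_of_pow_eq_one
        have hm1 : π (b ^ orderOf (π b)) = 1 := by rw [map_pow, pow_orderOf_eq_one]
        rw [hker] at hm1
        have := hbk (orderOf (π b) : ℤ) (by rwa [zpow_natCast])
        rwa [zpow_natCast] at this
      exact Nat.dvd_antisymm h1 h2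
    have htop : Subgroup.zpowers (π b) = ⊤ := by
      have hmap := congrArg (Subgroup.map π) hgen
      rw [Subgroup.map_sup, MonoidHom.map_zpowers, MonoidHom.map_zpowers] at hmap
      have hpa : π a = 1 := (hker a).mpr (Subgroup.mem_zpowers a)
      rw [hpa, Subgroup.zpowers_one_eq_bot, bot_sup_eq,
        Subgroup.map_top_of_surjective _ (QuotientGroup.mk'_surjective _)] at hmap
      exact hmap
    obtain ⟨t, hwt⟩ : ∃ t : ℤ, (π b) ^ t = π w := by
      have : π w ∈ Subgroup.zpowers (π b) := htop ▸ Subgroup.mem_top _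
      exact Subgroup.mem_zpowers_iff.mp this
    have hnt : ¬ ((2:ℤ)^m ∣ t) := by
      intro hdvd
      apply hwa
      rw [← hker, ← hwt]
      have : ((orderOf (π b) : ℤ)) ∣ t := by
        rw [hordb]; exact_mod_cast hdvd
      exact orderOf_dvd_iff_zpow_eq_one.mp this
    obtain ⟨s, c, hsc⟩ := aux_bezout m hm t hnt
    have hb2m : (π b) ^ ((2:ℤ)^m) = 1 := by
      apply orderOf_dvd_iff_zpow_eq_one.mp
      rw [hordb]; exact_mod_cast dvd_refl _
    have hπu : π u = (π w) ^ s := by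
      have h1 : π u = (π b) ^ ((2:ℤ)^(m-1)) := by
        rw [hudef, map_pow, ← zpow_natCast]; push_cast; ring_nf
      rw [h1, hsc, zpow_add, zpow_mul, zpow_mul, hwt, hb2m, one_zpow, mul_one]
    have hmem : u * (w ^ s)⁻¹ ∈ Subgroup.zpowers a := by
      rw [← hker, map_mul, map_inv, map_zpow, hπu]
      simp
    obtain ⟨c2, hc2⟩ := Subgroup.mem_zpowers_iff.mp hmem
    have hu_eq : u = a ^ c2 * w ^ s := by rw [hc2]; group
    have hcw : Commute a w := Subgroup.mem_center_iff.mp hwZ a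
    have hw : Commute a (w ^ s) := hcw.zpow_right s
    have ha2 : Commute a (a ^ c2) := (Commute.refl a).zpow_right c2
    exact hu_eq ▸ ha2.mul_right hw
  have hzu : Commute z u := hua.pow_left _
  -- Step 3 : every involution lies in {1, z, u, z*u}
  have hS : {g : G | g ^ 2 = 1} ⊆ ({1, z, u, z*u} : Set G) := by
    have hdecomp : ∀ g : G, ∃ (i j : ℤ), g = a ^ i * b ^ j := by
      intro g
      have hg : g ∈ ((Subgroup.zpowers a : Set G) * (Subgroup.zpowers b : Set G)) := by
        rw [← Subgroup.normal_mul, hgen]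
        simp
      rw [Set.mem_mul] at hg
      obtain ⟨x, hx, y, hy, hxy⟩ := hg
      obtain ⟨i, hi⟩ := Subgroup.mem_zpowers_iff.mp hx
      obtain ⟨j, hj⟩ := Subgroup.mem_zpowers_iff.mp hy
      exact ⟨i, j, by rw [← hxy, ← hi, ← hj]⟩
    intro g hg
    obtain ⟨i, j, rfl⟩ := hdecomp g
    have hgsq : (a ^ i * b ^ j) ^ 2 = 1 := hg
    set cstar := b ^ j * a ^ i * (b ^ j)⁻¹ with hc
    have hcmem : cstar ∈ Subgroup.zpowers a :=
      hN.conj_mem _ (Subgroup.zpow_mem _ (Subgroup.mem_zpowers a) i) (b ^ j)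
    have hsplit : (a ^ i * b ^ j) ^ 2 = (a ^ i * cstar) * b ^ (2*j) := by
      rw [hc, pow_two]; group
    rw [hsplit] at hgsq
    have hb2 : b ^ (2*j) = 1 := by
      apply hbk
      have h : b ^ (2*j) = (a ^ i * cstar)⁻¹ :=
        (inv_eq_of_mul_eq_one_right hgsq).symm
      rw [h]
      exact Subgroup.inv_mem _
        (mul_mem (Subgroup.zpow_mem _ (Subgroup.mem_zpowers a) i) hcmem)
    rw [hb2, mul_one] at hgsq
    -- 2^(m-1) divides j
    have hjd : (2:ℤ)^(m-1) ∣ j := by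
      have hdv := orderOf_dvd_iff_zpow_eq_one.mpr hb2
      rw [hb] at hdv
      push_cast at hdv
      rw [hZpow m hm] at hdv
      obtain ⟨k, hk⟩ := hdv
      refine ⟨k, ?_⟩
      have h3 : 2 * j = 2 * (2^(m-1) * k) := by rw [hk]; ring
      exact mul_left_cancel₀ (by norm_num) h3
    obtain ⟨k, rfl⟩ := hjd
    have hbj : b ^ ((2:ℤ)^(m-1) * k) = u ^ k := by
      rw [zpow_mul, hudef, ← zpow_natCast b (2^(m-1))]
      push_cast
      ring_nf
    -- u ^ k is 1 or u
    have huk : b ^ ((2:ℤ)^(m-1) * k) = 1 ∨ b ^ ((2:ℤ)^(m-1) * k) = u := by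
      have hu2' : u ^ (2:ℤ) = 1 := by rw [zpow_two, hu2]
      rcases Int.even_or_odd k with ⟨l, hl⟩ | ⟨l, hl⟩
      · left
        rw [hbj, hl, ← two_mul, zpow_mul, hu2', one_zpow]
      · right
        rw [hbj, hl, zpow_add, zpow_mul, hu2', one_zpow, one_mul, zpow_one]
    -- a^i is 1 or z
    have hcstar : cstar = a ^ i := by
      rcases huk with h | h
      · rw [hc, h]; group
      · rw [hc, h]
        have : Commute (a ^ i) u := hua.zpow_left i
        rw [← this.eq]
        group
    rw [hcstar] at hgsq
    have hgsq2 : a ^ (2*i) = 1 := by rw [two_mul, zpow_add]; exact hgsq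
    have haid : (2:ℤ)^(n-1) ∣ i := by
      have hdv := orderOf_dvd_iff_zpow_eq_one.mpr hgsq2
      rw [ha] at hdv
      push_cast at hdv
      rw [hZpow n hn] at hdv
      obtain ⟨k2, hk2⟩ := hdv
      refine ⟨k2, ?_⟩
      have h3 : 2 * i = 2 * (2^(n-1) * k2) := by rw [hk2]; ring
      exact mul_left_cancel₀ (by norm_num) h3
    obtain ⟨k2, rfl⟩ := haid
    have haj : a ^ ((2:ℤ)^(n-1) * k2) = z ^ k2 := by
      rw [zpow_mul, hzdef, ← zpow_natCast a (2^(n-1))]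
      push_cast
      ring_nf
    have hzk : a ^ ((2:ℤ)^(n-1) * k2) = 1 ∨ a ^ ((2:ℤ)^(n-1) * k2) = z := by
      have hz2' : z ^ (2:ℤ) = 1 := by rw [zpow_two, hz2]
      rcases Int.even_or_odd k2 with ⟨l, hl⟩ | ⟨l, hl⟩
      · left
        rw [haj, hl, ← two_mul, zpow_mul, hz2', one_zpow]
      · right
        rw [haj, hl, zpow_add, zpow_mul, hz2', one_zpow, one_mul, zpow_one]
    rcases hzk with h1 | h1 <;> rcases huk with h2 | h2 <;> rw [h1, h2]
    · left; rw [mul_one]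
    · right; right; left; rw [one_mul]
    · right; left; rw [mul_one]
    · right; right; right; rfl
  clear hzdef hudef
  clear_value z u
  -- distinctness
  have h1zu : (1:G) ≠ z * u := by
    intro h
    apply hznu
    have hui : u⁻¹ = u := inv_eq_of_mul_eq_one_left hu2
    have : z = u⁻¹ := by rw [eq_inv_iff_mul_eq_one]; exact h.symm
    rw [hui] at this; exact this
  have hzzu : z ≠ z * u := fun h => hu1 (left_eq_mul.mp h)
  have huzu : u ≠ z * u := fun h => hz1 (right_eq_mul.mp h)
  have hzu2 : (z * u) * (z * u) = 1 := by
    calc (z * u) * (z * u) = z * (u * z) * u := by group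
      _ = z * (z * u) * u := by rw [← hzu.eq]
      _ = (z * z) * (u * u) := by group
      _ = 1 := by rw [hz2, hu2, one_mul]
  -- multiplication table
  have e1 : z * (z * u) = u := by rw [← mul_assoc, hz2, one_mul]
  have e2 : u * z = z * u := hzu.eq.symm
  have e3 : u * (z * u) = z := by
    rw [← mul_assoc, e2, mul_assoc, hu2, mul_one]
  have e4 : (z * u) * z = u := by
    rw [mul_assoc, e2, ← mul_assoc, hz2, one_mul]
  have e5 : (z * u) * u = z := by rw [mul_assoc, hu2, mul_one]
  have hmul : ∀ x y : G, x ∈ ({1, z, u, z*u} : Set G) → y ∈ ({1, z, u, z*u} : Set G) →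
      x * y ∈ ({1, z, u, z*u} : Set G) := by
    rintro x y (rfl | rfl | rfl | rfl) (rfl | rfl | rfl | rfl) <;>
      simp only [one_mul, mul_one, hz2, hu2, hzu2, e1, e2, e3, e4, e5, Set.mem_insert_iff,
        Set.mem_singleton_iff] <;> tauto
  let W : Subgroup G := {
    carrier := {1, z, u, z*u}
    one_mem' := by left; rfl
    inv_mem' := by
      rintro x (rfl | rfl | rfl | rfl)
      · left; simp
      · right; left; exact inv_eq_of_mul_eq_one_left hz2
      · right; right; left; exact inv_eq_of_mul_eq_one_left hu2
      · right; right; right; exact inv_eq_of_mul_eq_one_left hzu2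
    mul_mem' := fun hx hy => hmul _ _ hx hy }
  have hWset : (W : Set G) = {1, z, u, z*u} := rfl
  have hWz : z ∈ W := by right; left; rfl
  have hWu : u ∈ W := by right; right; left; rfl
  -- the closure equals W
  have hVW : Subgroup.closure {g : G | g ^ 2 = 1} = W := by
    apply le_antisymm
    · exact (Subgroup.closure_le W).mpr hS
    · intro x hx
      have hzS : z ∈ {g : G | g ^ 2 = 1} := by
        rw [Set.mem_setOf_eq, pow_two]; exact hz2
      have huS : u ∈ {g : G | g ^ 2 = 1} := by
        rw [Set.mem_setOf_eq, pow_two]; exact hu2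
      have hzc := Subgroup.subset_closure hzS
      have huc := Subgroup.subset_closure huS
      rcases hx with rfl | rfl | rfl | rfl
      · exact one_mem _
      · exact hzc
      · exact huc
      · exact mul_mem hzc huc
  -- cardinality of W
  have hcard : Nat.card W = 4 := by
    have h1 : Nat.card W = ({1, z, u, z*u} : Set G).ncard := by
      rw [← Nat.card_coe_set_eq]
      rfl
    rw [h1]
    rw [Set.ncard_insert_of_notMem (by
      simp only [Set.mem_insert_iff, Set.mem_singleton_iff]
      push_neg
      exact ⟨Ne.symm hz1, Ne.symm hu1, h1zu⟩)]
    rw [Set.ncard_insert_of_notMem (by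
      simp only [Set.mem_insert_iff, Set.mem_singleton_iff]
      push_neg
      exact ⟨hznu, hzzu⟩)]
    rw [Set.ncard_insert_of_notMem (by
      simp only [Set.mem_singleton_iff]
      exact huzu)]
    rw [Set.ncard_singleton]
  -- exponent of W
  have hexp : Monoid.exponent W = 2 := by
    have hdvd : Monoid.exponent W ∣ 2 := by
      apply Monoid.exponent_dvd_of_forall_pow_eq_one
      rintro ⟨x, hx⟩
      have hx2 : x * x = 1 := by
        rcases hx with rfl | rfl | rfl | rfl
        · rw [one_mul]
        · exact hz2
        · exact hu2
        · exact hzu2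
      apply Subtype.ext
      push_cast
      rw [pow_two]
      exact hx2
    rcases (Nat.prime_two).eq_one_or_self_of_dvd _ hdvd with h1 | h2
    · exfalso
      have hzW : (⟨z, hWz⟩ : W) = 1 := by
        have := Monoid.pow_exponent_eq_one (⟨z, hWz⟩ : W)
        rwa [h1, pow_one] at this
      exact hz1 (congrArg Subtype.val hzW)
    · exact h2
  haveI hK1 : IsKleinFour W := ⟨hcard, hexp⟩
  haveI hK2 : IsKleinFour (Multiplicative (ZMod 2) × Multiplicative (ZMod 2)) := by
    constructor
    · simp [Nat.card_prod]
    · rw [Monoid.exponent_prod]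
      simp
  rw [hVW]
  exact IsKleinFour.nonempty_mulEquiv
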